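/- Norm bound on the twiddle (Lemma 8): For every linear operator X on V, ‖X̃‖ ≤ √m · ‖X‖ / g, where ‖·‖ is the operator norm, m is the number of eigenvalues in the band, and g is the spectral gap. -/

import Mathlib

set_option maxHeartbeats 1000000

open Finset

private lemma pyth_sum {V : Type*} [NormedAddCommGroup V] [InnerProductSpace ℂ V]
    {ι : Type*} (s : Finset ι) (u : ι → V)
    (h : ∀ i ∈ s, ∀ j ∈ s, i ≠ j → (inner ℂ (u i) (u j) : ℂ) = 0) :
    ‖∑ i ∈ s, u i‖ ^ 2 = ∑ i ∈ s, ‖u i‖ ^ 2 := by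
  classical
  have key : (inner ℂ (∑ i ∈ s, u i) (∑ i ∈ s, u i) : ℂ) = ∑ i ∈ s, (‖u i‖ : ℂ) ^ 2 := by
    rw [sum_inner]
    refine Finset.sum_congr rfl fun i hi => ?_
    rw [inner_sum, Finset.sum_eq_single i]
    · exact inner_self_eq_norm_sq_to_K (u i)
    · intro j hj hne; exact h i hi j hj (Ne.symm hne)
    · intro h'; exact absurd hi h'
  rw [inner_self_eq_norm_sq_to_K (𝕜 := ℂ) (∑ i ∈ s, u i)] at key
  exact Complex.ofReal_injective (by push_cast; exact key)

/-- **Norm bound on the twiddle (Lemma 8).**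

`H` is a self-adjoint operator on a finite-dimensional complex inner product space with
spectral decomposition `H = Σᵢ μs i • Pi i` (`Pi i` orthogonal spectral projections,
pairwise orthogonal, summing to `1`, distinct eigenvalues `μs i`).  The band consists of
the `m` eigenvalues `μs (ι j)` (`ι` injective), with spectral projections
`Pⱼ = Pi (ι j)`, and the spectral gap satisfies `g ≤ |μ − λⱼ|` for every eigenvalue `μ`
outside the band, `g > 0`.  With the reduced resolvent
`R̂_{λⱼ} = Σ_{i ∉ range ι} (μs i − μs (ι j))⁻¹ • Pi i` and the twiddle
`X̃ := −Σⱼ ( Pⱼ X R̂_{λⱼ} + R̂_{λⱼ} X Pⱼ )`, one has `‖X̃‖ ≤ √m ‖X‖ / g`. -/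
theorem twiddle_norm_bound
    {V : Type*} [NormedAddCommGroup V] [InnerProductSpace ℂ V] [FiniteDimensional ℂ V]
    (H : V →L[ℂ] V) (hH : IsSelfAdjoint H)
    (N : ℕ) (μs : Fin N → ℝ) (Pi : Fin N → V →L[ℂ] V)
    (hμinj : Function.Injective μs)
    (hPisa : ∀ i, IsSelfAdjoint (Pi i))
    (hPiidem : ∀ i, Pi i ∘L Pi i = Pi i)
    (hPine : ∀ i, Pi i ≠ 0)
    (hPiorth : ∀ i i', i ≠ i' → Pi i ∘L Pi i' = 0)
    (hPisum : ∑ i, Pi i = 1)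
    (hHspec : H = ∑ i, (μs i : ℂ) • Pi i)
    (m : ℕ) (ι : Fin m → Fin N) (hι : Function.Injective ι)
    (g : ℝ) (hg : 0 < g)
    (hgap : ∀ i, (∀ j, ι j ≠ i) → ∀ j, g ≤ |μs i - μs (ι j)|) :
    ∀ X : V →L[ℂ] V,
      ‖-(∑ j, (Pi (ι j) ∘L X ∘L
            (∑ i ∈ Finset.univ.filter (fun i => ∀ j', ι j' ≠ i),
              (((μs i : ℂ) - (μs (ι j) : ℂ))⁻¹) • Pi i)
          + (∑ i ∈ Finset.univ.filter (fun i => ∀ j', ι j' ≠ i),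
              (((μs i : ℂ) - (μs (ι j) : ℂ))⁻¹) • Pi i) ∘L X ∘L Pi (ι j)))‖
        ≤ Real.sqrt m * ‖X‖ / g := by
  classical
  intro X
  set S : Finset (Fin N) := Finset.univ.filter (fun i => ∀ j', ι j' ≠ i) with hS
  set R : Fin m → (V →L[ℂ] V) :=
    fun j => ∑ i ∈ S, (((μs i : ℂ) - (μs (ι j) : ℂ))⁻¹) • Pi i with hRdef
  -- symmetry of projections
  have hsym : ∀ i (v w : V), (inner ℂ (Pi i v) w : ℂ) = inner ℂ v (Pi i w) := by
    intro i v w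
    exact (ContinuousLinearMap.isSelfAdjoint_iff_isSymmetric.mp (hPisa i)) v w
  -- orthogonality
  have horth : ∀ i i', i ≠ i' → ∀ v w : V, (inner ℂ (Pi i v) (Pi i' w) : ℂ) = 0 := by
    intro i i' hne v w
    rw [hsym]
    have : Pi i (Pi i' w) = (Pi i ∘L Pi i') w := rfl
    rw [this, hPiorth i i' hne]
    simp
  -- sum of squared projections equals squared norm
  have hsum_sq : ∀ v : V, ∑ i, ‖Pi i v‖ ^ 2 = ‖v‖ ^ 2 := by
    intro v
    have hv : v = ∑ i, Pi i v := by
      have := congrArg (fun T : V →L[ℂ] V => T v) hPisum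
      simpa using this.symm
    conv_rhs => rw [hv]
    rw [pyth_sum]
    intro i _ j _ hne
    exact horth i j hne v v
  -- projection contraction
  have hPcontract : ∀ i (w : V), ‖Pi i w‖ ≤ ‖w‖ := by
    intro i w
    have h1 : ‖Pi i w‖ ^ 2 ≤ ‖w‖ ^ 2 := by
      rw [← hsum_sq w]
      exact Finset.single_le_sum (f := fun i => ‖Pi i w‖ ^ 2) (fun i _ => sq_nonneg _)
        (Finset.mem_univ i)
    nlinarith [norm_nonneg (Pi i w), norm_nonneg w]
  -- coefficient bound
  have hcoef : ∀ i ∈ S, ∀ j, ‖(((μs i : ℂ) - (μs (ι j) : ℂ))⁻¹)‖ ≤ g⁻¹ := by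
    intro i hi j
    have hiS : ∀ j', ι j' ≠ i := by
      simpa [hS] using hi
    have hgl := hgap i hiS j
    have : ((μs i : ℂ) - (μs (ι j) : ℂ)) = ((μs i - μs (ι j) : ℝ) : ℂ) := by push_cast; ring
    rw [this, norm_inv, Complex.norm_real, Real.norm_eq_abs]
    exact inv_anti₀ hg hgl
  -- resolvent bound against partial projections sums
  have hRsq : ∀ j (w : V), ‖R j w‖ ^ 2 ≤ g⁻¹ ^ 2 * ∑ i ∈ S, ‖Pi i w‖ ^ 2 := by
    intro j w
    have happ : R j w = ∑ i ∈ S, (((μs i : ℂ) - (μs (ι j) : ℂ))⁻¹) • Pi i w := by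
      simp [hRdef, ContinuousLinearMap.sum_apply]
    rw [happ, pyth_sum, Finset.mul_sum]
    · refine Finset.sum_le_sum fun i hi => ?_
      rw [norm_smul, mul_pow]
      have h1 := hcoef i hi j
      have := sq_nonneg ‖Pi i w‖
      gcongr
    · intro i hi i' hi' hne
      rw [inner_smul_left, inner_smul_right]
      rw [horth i i' hne]
      ring
  -- resolvent norm bound
  have hRnorm : ∀ j (w : V), ‖R j w‖ ≤ g⁻¹ * ‖w‖ := by
    intro j w
    have h1 : ‖R j w‖ ^ 2 ≤ (g⁻¹ * ‖w‖) ^ 2 := by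
      refine le_trans (hRsq j w) ?_
      rw [mul_pow]
      gcongr
      rw [← hsum_sq w]
      exact Finset.sum_le_sum_of_subset_of_nonneg (Finset.subset_univ S)
        (fun i _ _ => sq_nonneg _)
    have h2 : (0:ℝ) ≤ g⁻¹ * ‖w‖ := by positivity
    nlinarith [norm_nonneg (R j w)]
  refine ContinuousLinearMap.opNorm_le_bound _ (by positivity) fun v => ?_
  set a : V := ∑ j, Pi (ι j) (X (R j v)) with ha
  set b : V := ∑ j, R j (X (Pi (ι j) v)) with hb
  have happ : (-(∑ j, (Pi (ι j) ∘L X ∘L R j + R j ∘L X ∘L Pi (ι j)))) v = -(a + b) := by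
    simp only [ContinuousLinearMap.neg_apply, ContinuousLinearMap.sum_apply,
      ContinuousLinearMap.add_apply, ContinuousLinearMap.comp_apply, ha, hb,
      Finset.sum_add_distrib]
  rw [happ, norm_neg]
  -- abbreviations for projection mass inside and outside the band
  set p2 : ℝ := ∑ j, ‖Pi (ι j) v‖ ^ 2 with hp2
  set q2 : ℝ := ∑ i ∈ S, ‖Pi i v‖ ^ 2 with hq2
  have hp2nn : 0 ≤ p2 := Finset.sum_nonneg fun _ _ => sq_nonneg _
  have hq2nn : 0 ≤ q2 := Finset.sum_nonneg fun _ _ => sq_nonneg _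
  have hpq : p2 + q2 ≤ ‖v‖ ^ 2 := by
    have himg : p2 = ∑ i ∈ Finset.univ.image ι, ‖Pi i v‖ ^ 2 :=
      (Finset.sum_image (f := fun i => ‖Pi i v‖ ^ 2) (g := ι) (fun x _ y _ h => hι h)).symm
    have hdisj : Disjoint (Finset.univ.image ι) S := by
      rw [Finset.disjoint_left]
      intro i hi hiS
      obtain ⟨j, _, rfl⟩ := Finset.mem_image.mp hi
      exact (Finset.mem_filter.mp hiS).2 j rfl
    calc p2 + q2 = ∑ i ∈ (Finset.univ.image ι) ∪ S, ‖Pi i v‖ ^ 2 := by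
          rw [himg, hq2, Finset.sum_union hdisj]
      _ ≤ ∑ i, ‖Pi i v‖ ^ 2 :=
          Finset.sum_le_sum_of_subset_of_nonneg (Finset.subset_univ _)
            (fun i _ _ => sq_nonneg _)
      _ = ‖v‖ ^ 2 := hsum_sq v
  -- bound on ‖a‖²
  have ha2 : ‖a‖ ^ 2 ≤ (m : ℝ) * (g⁻¹ ^ 2 * ‖X‖ ^ 2 * q2) := by
    rw [ha, pyth_sum]
    · have hterm : ∀ j : Fin m, ‖Pi (ι j) (X (R j v))‖ ^ 2 ≤ g⁻¹ ^ 2 * ‖X‖ ^ 2 * q2 := by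
        intro j
        have h1 : ‖Pi (ι j) (X (R j v))‖ ≤ ‖X (R j v)‖ := hPcontract _ _
        have h2 : ‖X (R j v)‖ ≤ ‖X‖ * ‖R j v‖ := X.le_opNorm _
        have h3 : ‖R j v‖ ^ 2 ≤ g⁻¹ ^ 2 * q2 := hRsq j v
        have h4 : ‖Pi (ι j) (X (R j v))‖ ^ 2 ≤ ‖X‖ ^ 2 * ‖R j v‖ ^ 2 := by
          have := (h1.trans h2)
          nlinarith [norm_nonneg (Pi (ι j) (X (R j v))), norm_nonneg (R j v),
            norm_nonneg X, mul_nonneg (norm_nonneg X) (norm_nonneg (R j v))]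
        calc ‖Pi (ι j) (X (R j v))‖ ^ 2 ≤ ‖X‖ ^ 2 * ‖R j v‖ ^ 2 := h4
          _ ≤ ‖X‖ ^ 2 * (g⁻¹ ^ 2 * q2) := by gcongr
          _ = g⁻¹ ^ 2 * ‖X‖ ^ 2 * q2 := by ring
      calc ∑ j, ‖Pi (ι j) (X (R j v))‖ ^ 2
          ≤ ∑ _j : Fin m, g⁻¹ ^ 2 * ‖X‖ ^ 2 * q2 := Finset.sum_le_sum fun j _ => hterm j
        _ = (m : ℝ) * (g⁻¹ ^ 2 * ‖X‖ ^ 2 * q2) := by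
            rw [Finset.sum_const, Finset.card_univ, Fintype.card_fin, nsmul_eq_mul]
    · intro j _ j' _ hne
      exact horth (ι j) (ι j') (fun h => hne (hι h)) _ _
  -- bound on ‖b‖
  have hb1 : ‖b‖ ≤ g⁻¹ * ‖X‖ * ∑ j, ‖Pi (ι j) v‖ := by
    calc ‖b‖ ≤ ∑ j, ‖R j (X (Pi (ι j) v))‖ := norm_sum_le _ _
      _ ≤ ∑ j, g⁻¹ * ‖X‖ * ‖Pi (ι j) v‖ := by
          refine Finset.sum_le_sum fun j _ => ?_
          calc ‖R j (X (Pi (ι j) v))‖ ≤ g⁻¹ * ‖X (Pi (ι j) v)‖ := hRnorm j _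
            _ ≤ g⁻¹ * (‖X‖ * ‖Pi (ι j) v‖) :=
                mul_le_mul_of_nonneg_left (X.le_opNorm _) (by positivity)
            _ = g⁻¹ * ‖X‖ * ‖Pi (ι j) v‖ := by ring
      _ = g⁻¹ * ‖X‖ * ∑ j, ‖Pi (ι j) v‖ := by rw [Finset.mul_sum]
  have hb2 : ‖b‖ ^ 2 ≤ (m : ℝ) * (g⁻¹ ^ 2 * ‖X‖ ^ 2 * p2) := by
    have hcs : (∑ j, ‖Pi (ι j) v‖) ^ 2 ≤ (m : ℝ) * p2 := by
      have := sq_sum_le_card_mul_sum_sq (s := (Finset.univ : Finset (Fin m)))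
        (f := fun j => ‖Pi (ι j) v‖)
      simpa [Finset.card_univ] using this
    have hsnn : 0 ≤ ∑ j, ‖Pi (ι j) v‖ := Finset.sum_nonneg fun _ _ => norm_nonneg _
    have h1 : ‖b‖ ^ 2 ≤ (g⁻¹ * ‖X‖ * ∑ j, ‖Pi (ι j) v‖) ^ 2 := by
      have hrhs : 0 ≤ g⁻¹ * ‖X‖ * ∑ j, ‖Pi (ι j) v‖ := by positivity
      nlinarith [norm_nonneg b]
    calc ‖b‖ ^ 2 ≤ (g⁻¹ * ‖X‖ * ∑ j, ‖Pi (ι j) v‖) ^ 2 := h1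
      _ = g⁻¹ ^ 2 * ‖X‖ ^ 2 * (∑ j, ‖Pi (ι j) v‖) ^ 2 := by ring
      _ ≤ g⁻¹ ^ 2 * ‖X‖ ^ 2 * ((m : ℝ) * p2) := by gcongr
      _ = (m : ℝ) * (g⁻¹ ^ 2 * ‖X‖ ^ 2 * p2) := by ring
  -- orthogonality of a and b
  have hab : (inner ℂ a b : ℂ) = 0 := by
    rw [ha, hb, sum_inner]
    refine Finset.sum_eq_zero fun j _ => ?_
    rw [inner_sum]
    refine Finset.sum_eq_zero fun j' _ => ?_
    have hRapp : R j' (X (Pi (ι j') v)) =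
        ∑ i ∈ S, (((μs i : ℂ) - (μs (ι j') : ℂ))⁻¹) • Pi i (X (Pi (ι j') v)) := by
      simp [hRdef, ContinuousLinearMap.sum_apply]
    rw [hRapp, inner_sum]
    refine Finset.sum_eq_zero fun i hi => ?_
    rw [inner_smul_right, horth (ι j) i ((Finset.mem_filter.mp hi).2 j) _ _, mul_zero]
  -- Pythagoras for a + b
  have habsq : ‖a + b‖ ^ 2 = ‖a‖ ^ 2 + ‖b‖ ^ 2 := by
    have := @norm_add_sq ℂ _ _ _ _ a b
    rw [hab] at this
    simpa using this
  -- conclude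
  have hm : (Real.sqrt m) ^ 2 = (m : ℝ) := Real.sq_sqrt (Nat.cast_nonneg m)
  have hfinal : ‖a + b‖ ^ 2 ≤ (Real.sqrt m * ‖X‖ / g * ‖v‖) ^ 2 := by
    have hr : (Real.sqrt m * ‖X‖ / g * ‖v‖) ^ 2
        = (m : ℝ) * (g⁻¹ ^ 2 * ‖X‖ ^ 2 * ‖v‖ ^ 2) := by
      rw [div_eq_mul_inv]
      rw [mul_pow, mul_pow, mul_pow, hm]
      ring
    rw [habsq, hr]
    calc ‖a‖ ^ 2 + ‖b‖ ^ 2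
        ≤ (m : ℝ) * (g⁻¹ ^ 2 * ‖X‖ ^ 2 * q2) + (m : ℝ) * (g⁻¹ ^ 2 * ‖X‖ ^ 2 * p2) :=
          add_le_add ha2 hb2
      _ = (m : ℝ) * (g⁻¹ ^ 2 * ‖X‖ ^ 2 * (p2 + q2)) := by ring
      _ ≤ (m : ℝ) * (g⁻¹ ^ 2 * ‖X‖ ^ 2 * ‖v‖ ^ 2) := by gcongr
  have hrn : 0 ≤ Real.sqrt m * ‖X‖ / g * ‖v‖ := by positivity
  nlinarith [norm_nonneg (a + b)]
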